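/- Let n ≥ 1 and m ≥ 1, let A_0, A_1, …, A_m be n×n complex matrices, let α ∈ ℂ with α ≠ 0, and let φ : Fin n → ℂ satisfy φ i ≠ 0 for every i. Assume the algebraic condition ∑_{k=0}^{m} α^{m−k} • (A_k).mulVec φ = 0 (i.e., φ is in the kernel of the matrix A_m + A_{m−1} α + ⋯ + A_0 α^m after multiplying through by α^m). Define u : Fin n → ℂ → ℂ by u i t := (φ i)⁻¹ * Complex.exp (α * t). Then for every t ∈ ℂ, ∑_{k=0}^{m} (A_k).mulVec (fun i => (iteratedDeriv k (u i) t)⁻¹) = 0; that is, the vector function u solves the nonlinear system of differential equations A_m (u^{(m)})^{−1} + A_{m−1} (u^{(m−1)})^{−1} + ⋯ + A_0 u^{−1} = 0, where for a vector v, v^{−1} denotes the vector of entrywise reciprocals and u^{(k)} denotes the vector of k-th derivatives. -/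

import Mathlib

/-- Let `A_0, …, A_m` be `n × n` complex matrices, `α ≠ 0`, and let
`φ` be a vector all of whose components are nonzero such that
`∑_{k=0}^m α^(m−k) • A_k.mulVec φ = 0`.  Then the vector function
`u i t := (φ i)⁻¹ · exp (α t)` solves the nonlinear system
`A_m (u^(m))⁻¹ + A_{m−1} (u^(m−1))⁻¹ + ⋯ + A_0 u⁻¹ = 0`, where inverses of vectors
are taken entrywise. -/
theorem solution_of_nonlinear_system_from_eigenvector
    (n m : ℕ) (hn : 1 ≤ n) (hm : 1 ≤ m)
    (A : Fin (m + 1) → Matrix (Fin n) (Fin n) ℂ)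
    (α : ℂ) (hα : α ≠ 0)
    (φ : Fin n → ℂ) (hφ : ∀ i, φ i ≠ 0)
    (hker : ∑ k : Fin (m + 1), α ^ (m - (k : ℕ)) • (A k).mulVec φ = 0) :
    ∀ t : ℂ,
      ∑ k : Fin (m + 1),
        (A k).mulVec
          (fun i => (iteratedDeriv (k : ℕ) (fun s => (φ i)⁻¹ * Complex.exp (α * s)) t)⁻¹) = 0 := by
  intro t
  have hk0 : ∀ (c : ℂ) (k : ℕ), iteratedDeriv k (fun s => c * Complex.exp (α * s))
      = fun x => c * (α ^ k * Complex.exp (α * x)) := by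
    intro c k
    induction k with
    | zero => simp
    | succ k ih =>
      rw [iteratedDeriv_succ, ih]
      funext x
      have h1 : HasDerivAt (fun x : ℂ => c * (α ^ k * Complex.exp (α * x)))
          (c * (α ^ (k + 1) * Complex.exp (α * x))) x := by
        have h := ((hasDerivAt_id x).const_mul α).cexp
        have h2 := h.const_mul (c * α ^ k)
        convert h2 using 1
        · exact rfl
        · exact rfl
        · funext y; simp [id_eq]; ring
        · simp [id_eq, pow_succ]; ring
      rw [h1.deriv]
  set E := Complex.exp (α * t) with hEdef
  have hE : E ≠ 0 := Complex.exp_ne_zero _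
  have key : ∀ k : Fin (m + 1),
      (fun i => (iteratedDeriv (k : ℕ) (fun s => (φ i)⁻¹ * Complex.exp (α * s)) t)⁻¹)
        = (α ^ (k : ℕ) * E)⁻¹ • φ := by
    intro k
    funext i
    rw [hk0]
    simp only [Pi.smul_apply, smul_eq_mul, mul_inv, inv_inv, ← hEdef]
    ring
  have hcoef : ∀ k : Fin (m + 1), (α ^ (k : ℕ) * E)⁻¹ = (α ^ m * E)⁻¹ * α ^ (m - (k : ℕ)) := by
    intro k
    have hk : (k : ℕ) ≤ m := Nat.lt_succ_iff.mp k.isLt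
    have hpow : α ^ (m - (k : ℕ)) * α ^ (k : ℕ) = α ^ m := pow_sub_mul_pow α hk
    field_simp
    rw [← hpow]; ring
  have main : ∑ k : Fin (m + 1),
      (A k).mulVec
        (fun i => (iteratedDeriv (k : ℕ) (fun s => (φ i)⁻¹ * Complex.exp (α * s)) t)⁻¹)
      = (α ^ m * E)⁻¹ • ∑ k : Fin (m + 1), α ^ (m - (k : ℕ)) • (A k).mulVec φ := by
    rw [Finset.smul_sum]
    refine Finset.sum_congr rfl fun k _ => ?_
    rw [key k, Matrix.mulVec_smul, smul_smul, hcoef k]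
  rw [main, hker, smul_zero]
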